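/- For weights w, v on Ω, [w,v]_{(∞,1)} = ‖M(v^{-1})‖_{L^∞_w(Ω)} = ‖M‖_{L^∞_v(Ω) → L^∞_w(Ω)}. -/

import Mathlib

open MeasureTheory ENNReal

noncomputable def eNorm {Ω : Type*} [MeasurableSpace Ω] (f : Ω → ℝ≥0∞) (s : ℝ≥0∞)
    (μ : Measure Ω) : ℝ≥0∞ :=
  if s = ∞ then essSup f μ else (∫⁻ x, f x ^ s.toReal ∂μ) ^ s.toReal⁻¹

noncomputable def wChar {Ω : Type*} [MeasurableSpace Ω] (μ : Measure Ω) (𝒰 : Set (Set Ω))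
    (w v : Ω → ℝ≥0∞) (s r : ℝ≥0∞) : ℝ≥0∞ :=
  ⨆ U ∈ 𝒰, (μ U) ^ (-(s⁻¹ + r⁻¹).toReal) * eNorm w s (μ.restrict U)
    * eNorm (fun x => (v x)⁻¹) r (μ.restrict U)

noncomputable def maxOp {Ω : Type*} [MeasurableSpace Ω] (μ : Measure Ω) (𝒰 : Set (Set Ω))
    (f : Ω → ℝ≥0∞) (x : Ω) : ℝ≥0∞ :=
  ⨆ U ∈ 𝒰, ((μ U)⁻¹ * ∫⁻ y in U, f y ∂μ) * Set.indicator U (fun _ => (1 : ℝ≥0∞)) x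

def IsBasis {Ω : Type*} [MeasurableSpace Ω] (μ : Measure Ω) (𝒰 : Set (Set Ω)) : Prop :=
  𝒰.Countable ∧ (∀ U ∈ 𝒰, MeasurableSet U ∧ 0 < μ U ∧ μ U < ∞) ∧
    (⋃ U ∈ 𝒰, U) = Set.univ ∧ ∀ x y : Ω, ∃ U ∈ 𝒰, x ∈ U ∧ y ∈ U

def IsWeight {Ω : Type*} [MeasurableSpace Ω] (w : Ω → ℝ≥0∞) : Prop :=
  Measurable w ∧ ∀ x, 0 < w x ∧ w x < ∞

/-- The `L^∞_w` norm of `M f` equals the sup over `U` of the averages times `essSup w`. -/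
lemma key_eNorm_maxOp {Ω : Type*} [MeasurableSpace Ω] (μ : Measure Ω)
    (𝒰 : Set (Set Ω)) (hcnt : 𝒰.Countable)
    (hmem : ∀ U ∈ 𝒰, MeasurableSet U ∧ 0 < μ U ∧ μ U < ∞)
    (w : Ω → ℝ≥0∞) (f : Ω → ℝ≥0∞) :
    eNorm (fun x => maxOp μ 𝒰 f x * w x) ∞ μ
      = ⨆ U ∈ 𝒰, ((μ U)⁻¹ * ∫⁻ y in U, f y ∂μ) * essSup w (μ.restrict U) := by
  simp only [eNorm, if_pos rfl]
  have h1 : (fun x => maxOp μ 𝒰 f x * w x)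
      = fun x => ⨆ U ∈ 𝒰, ((μ U)⁻¹ * ∫⁻ y in U, f y ∂μ) * Set.indicator U w x := by
    funext x
    rw [maxOp, ENNReal.iSup_mul]
    refine iSup_congr fun U => ?_
    rw [ENNReal.iSup_mul]
    refine iSup_congr fun hU => ?_
    rw [mul_assoc]
    congr 1
    by_cases hx : x ∈ U <;>
      simp [Set.indicator_of_mem, Set.indicator_of_notMem, hx]
  rw [h1]
  have hg : ∀ U ∈ 𝒰, essSup (fun x => ((μ U)⁻¹ * ∫⁻ y in U, f y ∂μ) * Set.indicator U w x) μ
      = ((μ U)⁻¹ * ∫⁻ y in U, f y ∂μ) * essSup w (μ.restrict U) := by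
    intro U hU
    rw [ENNReal.essSup_const_mul, ENNReal.essSup_indicator_eq_essSup_restrict (hmem U hU).1]
  refine le_antisymm ?_ ?_
  · refine essSup_le_of_ae_le _ ?_
    have hae : ∀ᵐ x ∂μ, ∀ U ∈ 𝒰,
        ((μ U)⁻¹ * ∫⁻ y in U, f y ∂μ) * Set.indicator U w x
          ≤ essSup (fun x => ((μ U)⁻¹ * ∫⁻ y in U, f y ∂μ) * Set.indicator U w x) μ := by
      rw [ae_ball_iff hcnt]
      intro U hU
      exact ENNReal.ae_le_essSup _
    filter_upwards [hae] with x hx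
    refine iSup₂_le fun U hU => ?_
    refine le_trans (hx U hU) ?_
    rw [hg U hU]
    exact le_iSup₂_of_le U hU le_rfl
  · refine iSup₂_le fun U hU => ?_
    rw [← hg U hU]
    refine essSup_mono_ae (Filter.Eventually.of_forall fun x => ?_)
    exact le_iSup₂_of_le U hU le_rfl

/-- `[w,v]_{(∞,1)} = ‖M(v⁻¹)‖_{L^∞_w} = ‖M‖_{L^∞_v → L^∞_w}`. -/
theorem weight_char_infty_one {Ω : Type*} [MeasurableSpace Ω] (μ : Measure Ω) [SigmaFinite μ]
    (𝒰 : Set (Set Ω)) (h𝒰 : IsBasis μ 𝒰) (w v : Ω → ℝ≥0∞)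
    (hw : IsWeight w) (hv : IsWeight v) :
    wChar μ 𝒰 w v ∞ 1 = eNorm (fun x => maxOp μ 𝒰 (fun y => (v y)⁻¹) x * w x) ∞ μ ∧
    eNorm (fun x => maxOp μ 𝒰 (fun y => (v y)⁻¹) x * w x) ∞ μ
      = (⨆ (f : Ω → ℝ≥0∞) (_ : Measurable f)
          (_ : eNorm (fun x => f x * v x) ∞ μ ≤ 1),
          eNorm (fun x => maxOp μ 𝒰 f x * w x) ∞ μ) := by
  obtain ⟨hcnt, hmem, -, -⟩ := h𝒰
  constructor
  · rw [key_eNorm_maxOp μ 𝒰 hcnt hmem w (fun y => (v y)⁻¹)]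
    refine iSup_congr fun U => iSup_congr fun hU => ?_
    simp only [wChar, eNorm, if_pos rfl, if_neg (ENNReal.one_ne_top)]
    simp only [ENNReal.inv_top, inv_one, zero_add, ENNReal.toReal_one, ENNReal.rpow_one, inv_one]
    rw [ENNReal.rpow_neg_one]
    simp only [if_true]
    ring
  · refine le_antisymm ?_ ?_
    · have hmf : Measurable fun y => (v y)⁻¹ := hv.1.inv
      have hcond : eNorm (fun x => (v x)⁻¹ * v x) ∞ μ ≤ 1 := by
        simp only [eNorm, if_pos rfl]
        refine essSup_le_of_ae_le _ (Filter.Eventually.of_forall fun x => ?_)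
        show (v x)⁻¹ * v x ≤ 1
        rw [ENNReal.inv_mul_cancel (hv.2 x).1.ne' (hv.2 x).2.ne]
      exact le_iSup₂_of_le (fun y => (v y)⁻¹) hmf (le_iSup_of_le hcond le_rfl)
    · refine iSup₂_le fun f hf => iSup_le fun hcond => ?_
      simp only [eNorm, if_pos rfl] at hcond ⊢
      have hae : ∀ᵐ x ∂μ, f x ≤ (v x)⁻¹ := by
        filter_upwards [ENNReal.ae_le_essSup (fun x => f x * v x)] with x hx
        have : f x * v x ≤ 1 := hx.trans hcond
        exact ENNReal.le_inv_iff_mul_le.2 this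
      refine essSup_mono_ae (Filter.Eventually.of_forall fun x => ?_)
      refine mul_le_mul' ?_ le_rfl
      refine iSup₂_mono fun U hU => ?_
      refine mul_le_mul' (mul_le_mul' le_rfl ?_) le_rfl
      exact lintegral_mono_ae (ae_restrict_of_ae hae)
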